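/- (Descendant-deletion step.) Let T=(V,E) be an unweighted tree with deterministic Graph-IRV, let u∈V, and root T at u. Let K={u}∪F be a candidate set with F⊆V\{u}, and suppose u is eliminated in round 1 of the IRV execution on K. If a,b∈F are distinct with a a proper ancestor of b in T rooted at u, then u is also eliminated in round 1 of the IRV execution on the candidate set K\{b}. In particular, every voter whose round-1 top choice under K is b lies in the subtree T_a rooted at a, and u's round-1 plurality score does not increase when b is deleted. -/

import Mathlib

section IRVCore

variable {V : Type*} [Fintype V] [DecidableEq V] [Nonempty V]

/-- The preference key of voter `x` for candidate `c`: lexicographic in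
(distance, candidate id), smaller preferred. -/
def voterKey (d : V → V → ℕ) (idv : V → ℕ) (x c : V) : Lex (ℕ × ℕ) :=
  toLex (d x c, idv c)

/-- Voter `x`'s top remaining candidate among the candidate set `K`. -/
noncomputable def topChoice (d : V → V → ℕ) (idv : V → ℕ) (x : V) (K : Finset V) : V :=
  if h : K.Nonempty then (Finset.exists_min_image K (voterKey d idv x) h).choose
  else Classical.arbitrary V

/-- Plurality score of candidate `c` within candidate set `K`. -/
noncomputable def plurality (d : V → V → ℕ) (idv : V → ℕ) (K : Finset V) (c : V) : ℕ :=
  (Finset.univ.filter fun x : V => topChoice d idv x K = c).card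

/-- Elimination key: minimize plurality score, break ties toward the largest id. -/
noncomputable def elimKey (d : V → V → ℕ) (idv : V → ℕ) (K : Finset V) (c : V) :
    Lex (ℤ × ℤ) :=
  toLex ((plurality d idv K c : ℤ), -(idv c : ℤ))

/-- The candidate eliminated in the current round. -/
noncomputable def roundLoser (d : V → V → ℕ) (idv : V → ℕ) (K : Finset V) : V :=
  if h : K.Nonempty then (Finset.exists_min_image K (elimKey d idv K) h).choose
  else Classical.arbitrary V

lemma roundLoser_mem (d : V → V → ℕ) (idv : V → ℕ) {K : Finset V} (h : K.Nonempty) :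
    roundLoser d idv K ∈ K := by
  unfold roundLoser
  rw [dif_pos h]
  exact (Finset.exists_min_image K (elimKey d idv K) h).choose_spec.1

/-- The IRV winner on candidate set `K`. -/
noncomputable def irvWinner (d : V → V → ℕ) (idv : V → ℕ) (K : Finset V) : V :=
  if h : 2 ≤ K.card then irvWinner d idv (K.erase (roundLoser d idv K))
  else if h2 : K.Nonempty then h2.choose else Classical.arbitrary V
termination_by K.card
decreasing_by
  exact Finset.card_erase_lt_of_mem (roundLoser_mem d idv (Finset.card_pos.mp (by omega)))

/-- `Kill d idv u A`: some candidate set `K` with `u ∈ K ⊆ A ∪ {u}` makes `u` lose. -/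
def Kill (d : V → V → ℕ) (idv : V → ℕ) (u : V) (A : Set V) : Prop :=
  ∃ K : Finset V, u ∈ K ∧ ↑K ⊆ insert u A ∧ irvWinner d idv K ≠ u

/-- `S` is an IRV exclusion zone. -/
def ExclusionZone (d : V → V → ℕ) (idv : V → ℕ) (S : Set V) : Prop :=
  ∀ K : Finset V, K.Nonempty → (∃ c ∈ K, c ∈ S) → irvWinner d idv K ∈ S

end IRVCore

/-- In a tree with distance function `d`, rooted at `u`: vertex `a` is an ancestor of `b`
(i.e. `a` lies on the unique path from the root `u` to `b`); membership of `x` in the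
subtree `T_a` rooted at `a` is exactly `IsAncestor d u a x`. -/
def IsAncestor {V : Type*} (d : V → V → ℕ) (u a b : V) : Prop :=
  d u a + d a b = d u b


section AuxLemmas

variable {V : Type*} [Fintype V] [DecidableEq V] [Nonempty V]

lemma topChoice_spec (d : V → V → ℕ) (idv : V → ℕ) (x : V) {K : Finset V} (h : K.Nonempty) :
    topChoice d idv x K ∈ K ∧
      ∀ c ∈ K, voterKey d idv x (topChoice d idv x K) ≤ voterKey d idv x c := by
  unfold topChoice
  rw [dif_pos h]
  exact (Finset.exists_min_image K (voterKey d idv x) h).choose_spec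

lemma voterKey_inj {idv : V → ℕ} (hid : Function.Injective idv) (d : V → V → ℕ) (x : V)
    {c c' : V} (h : voterKey d idv x c = voterKey d idv x c') : c = c' := by
  unfold voterKey at h
  exact hid (congrArg (fun p : Lex (ℕ × ℕ) => (ofLex p).2) h)

lemma topChoice_eq {idv : V → ℕ} (hid : Function.Injective idv) (d : V → V → ℕ)
    {K : Finset V} (h : K.Nonempty) (x c : V) (hc : c ∈ K)
    (hmin : ∀ c' ∈ K, voterKey d idv x c ≤ voterKey d idv x c') :
    topChoice d idv x K = c := by
  obtain ⟨ht, hm⟩ := topChoice_spec d idv x h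
  exact voterKey_inj hid d x (le_antisymm (hm c hc) (hmin _ ht))

lemma roundLoser_spec (d : V → V → ℕ) (idv : V → ℕ) {K : Finset V} (h : K.Nonempty) :
    ∀ c ∈ K, elimKey d idv K (roundLoser d idv K) ≤ elimKey d idv K c := by
  unfold roundLoser
  rw [dif_pos h]
  exact (Finset.exists_min_image K (elimKey d idv K) h).choose_spec.2

end AuxLemmas

lemma split_at_support {V : Type*} [DecidableEq V] {G : SimpleGraph V} (hc : G.Connected) {u v a : V}
    (w : G.Walk u v) (hw : w.length = G.dist u v) (ha : a ∈ w.support) :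
    G.dist u a + G.dist a v = G.dist u v := by
  have h1 : G.dist u a ≤ (w.takeUntil a ha).length := SimpleGraph.dist_le _
  have h2 : G.dist a v ≤ (w.dropUntil a ha).length := SimpleGraph.dist_le _
  have h3 : (w.takeUntil a ha).length + (w.dropUntil a ha).length = w.length := by
    rw [← SimpleGraph.Walk.length_append, w.take_spec ha]
  have h4 : G.dist u v ≤ G.dist u a + G.dist a v := hc.dist_triangle
  omega

lemma tree_split {V : Type*} [DecidableEq V] {G : SimpleGraph V} (hG : G.IsTree) (u a b x : V)
    (h : G.dist u a + G.dist a b = G.dist u b) :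
    G.dist u a + G.dist a x = G.dist u x ∨ G.dist x a + G.dist a b = G.dist x b := by
  have hc := hG.isConnected
  obtain ⟨p, hp⟩ := hc.exists_walk_length_eq_dist u a
  obtain ⟨q, hq⟩ := hc.exists_walk_length_eq_dist a b
  obtain ⟨r, hr⟩ := hc.exists_walk_length_eq_dist u x
  by_cases hmem : a ∈ r.support
  · exact Or.inl (split_at_support hc r hr hmem)
  · obtain ⟨s, hs⟩ := hc.exists_walk_length_eq_dist x b
    have hwlen : (p.append q).length = G.dist u b := by
      rw [SimpleGraph.Walk.length_append, hp, hq, h]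
    have hwpath : (p.append q).IsPath := by
      have hle : (p.append q).length ≤ (p.append q).bypass.length := by
        rw [hwlen]; exact SimpleGraph.dist_le _
      have hself := (p.append q).bypass_eq_self_of_length_le hle
      rw [← hself]; exact (p.append q).bypass_isPath
    have hbp : (r.append s).bypass = p.append q :=
      (hG.existsUnique_path u b).unique ((r.append s).bypass_isPath) hwpath
    have haw : a ∈ (p.append q).support := by
      rw [SimpleGraph.Walk.mem_support_append_iff]
      exact Or.inl (SimpleGraph.Walk.end_mem_support p)
    have hars : a ∈ (r.append s).support :=
      (r.append s).support_bypass_subset (hbp ▸ haw)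
    rw [SimpleGraph.Walk.mem_support_append_iff] at hars
    rcases hars with h' | h'
    · exact absurd h' hmem
    · exact Or.inr (split_at_support hc s hs h')

/-- **Descendant-deletion step.** Suppose `u` is eliminated in round 1 on `K = {u} ∪ F`
and `a, b ∈ F` are distinct with `a` a proper ancestor of `b` in the tree rooted at `u`.
Then `u` is still eliminated in round 1 on `K \ {b}`; moreover every voter whose round-1
top choice under `K` is `b` lies in the subtree rooted at `a`, and `u`'s round-1 plurality
score does not increase when `b` is deleted. -/
theorem descendant_deletion {V : Type*} [Fintype V] [DecidableEq V] [Nonempty V]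
    (G : SimpleGraph V) (hG : G.IsTree)
    (idv : V → ℕ) (hid : Function.Injective idv)
    (u : V) (F : Finset V) (huF : u ∉ F)
    (hround1 : roundLoser G.dist idv (insert u F) = u)
    (a b : V) (ha : a ∈ F) (hb : b ∈ F) (hab : a ≠ b)
    (hanc : IsAncestor G.dist u a b) :
    roundLoser G.dist idv ((insert u F).erase b) = u ∧
    (∀ x : V, topChoice G.dist idv x (insert u F) = b → IsAncestor G.dist u a x) ∧
    plurality G.dist idv ((insert u F).erase b) u ≤ plurality G.dist idv (insert u F) u := by
  
  classical
  set K := insert u F with hK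
  have hKne : K.Nonempty := ⟨u, Finset.mem_insert_self u F⟩
  have huK : u ∈ K := Finset.mem_insert_self u F
  have haK : a ∈ K := Finset.mem_insert_of_mem ha
  have hbK : b ∈ K := Finset.mem_insert_of_mem hb
  have hub : u ≠ b := fun h => huF (h ▸ hb)
  have hua : u ≠ a := fun h => huF (h ▸ ha)
  set K' := K.erase b with hK'
  have huK' : u ∈ K' := Finset.mem_erase.mpr ⟨hub, huK⟩
  have haK' : a ∈ K' := Finset.mem_erase.mpr ⟨hab, haK⟩
  have hK'ne : K'.Nonempty := ⟨u, huK'⟩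
  have hK'sub : K' ⊆ K := Finset.erase_subset _ _
  have hc := hG.isConnected
  have hdab : 0 < G.dist a b := hc.pos_dist_of_ne hab
  have hdua : 0 < G.dist u a := hc.pos_dist_of_ne hua
  have hanc' : G.dist u a + G.dist a b = G.dist u b := hanc
  -- Claim 2: each voter whose top choice is b lies in the subtree of a
  have claim2 : ∀ x : V, topChoice G.dist idv x K = b → IsAncestor G.dist u a x := by
    intro x hx
    obtain ⟨_, hmin⟩ := topChoice_spec G.dist idv x hKne
    rw [hx] at hmin
    have hba := hmin a haK
    unfold voterKey at hba
    rw [Prod.Lex.le_iff] at hba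
    have hdle : G.dist x b ≤ G.dist x a := by
      rcases hba with h' | h'
      · exact le_of_lt h'
      · exact le_of_eq h'.1
    rcases tree_split hG u a b x hanc' with h' | h'
    · exact h'
    · exact absurd h' (by omega)
  -- strict preference of a over u for such voters
  have hstrict : ∀ x : V, topChoice G.dist idv x K = b →
      voterKey G.dist idv x a < voterKey G.dist idv x u := by
    intro x hx
    have h2 : G.dist u a + G.dist a x = G.dist u x := claim2 x hx
    have e1 : G.dist x a = G.dist a x := SimpleGraph.dist_comm
    have e2 : G.dist x u = G.dist u x := SimpleGraph.dist_comm
    have hax : G.dist x a < G.dist x u := by omega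
    unfold voterKey
    rw [Prod.Lex.lt_iff]
    exact Or.inl hax
  have top_erase : ∀ x : V, topChoice G.dist idv x K ≠ b →
      topChoice G.dist idv x K' = topChoice G.dist idv x K := by
    intro x hx
    obtain ⟨htm, hmin⟩ := topChoice_spec G.dist idv x hKne
    exact topChoice_eq hid G.dist hK'ne x _ (Finset.mem_erase.mpr ⟨hx, htm⟩)
      (fun c' hc' => hmin c' (hK'sub hc'))
  have top_b : ∀ x : V, topChoice G.dist idv x K = b → topChoice G.dist idv x K' ≠ u := by
    intro x hx hu'
    obtain ⟨_, hmin'⟩ := topChoice_spec G.dist idv x hK'ne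
    have hle := hmin' a haK'
    rw [hu'] at hle
    exact absurd hle (not_le_of_gt (hstrict x hx))
  have pB : plurality G.dist idv K' u ≤ plurality G.dist idv K u := by
    apply Finset.card_le_card
    intro x hx
    simp only [Finset.mem_filter, Finset.mem_univ, true_and] at hx ⊢
    by_cases hb' : topChoice G.dist idv x K = b
    · exact absurd hx (top_b x hb')
    · rw [← top_erase x hb']; exact hx
  have pC : ∀ c ∈ K', plurality G.dist idv K c ≤ plurality G.dist idv K' c := by
    intro c hcK'
    apply Finset.card_le_card
    intro x hx
    simp only [Finset.mem_filter, Finset.mem_univ, true_and] at hx ⊢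
    have hcb : c ≠ b := Finset.ne_of_mem_erase hcK'
    rw [top_erase x (by rw [hx]; exact hcb)]
    exact hx
  have hKmin : ∀ c ∈ K, elimKey G.dist idv K u ≤ elimKey G.dist idv K c := by
    intro c hcK
    have h' := roundLoser_spec G.dist idv hKne c hcK
    rwa [hround1] at h'
  have hK'min : ∀ c ∈ K', elimKey G.dist idv K' u ≤ elimKey G.dist idv K' c := by
    intro c hcK'
    have h1 := hKmin c (hK'sub hcK')
    have h2 := pC c hcK'
    have h3 := pB
    unfold elimKey at h1 ⊢
    rw [Prod.Lex.le_iff] at h1 ⊢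
    simp only [ofLex_toLex] at h1 ⊢
    rcases h1 with h1 | ⟨h1a, h1b⟩
    · left; omega
    · rcases lt_or_ge ((plurality G.dist idv K' u : ℤ)) ((plurality G.dist idv K' c : ℤ))
        with h | h
      · exact Or.inl h
      · exact Or.inr ⟨by omega, h1b⟩
  have hloser : roundLoser G.dist idv K' = u := by
    have hmem := roundLoser_mem G.dist idv hK'ne
    have hle := roundLoser_spec G.dist idv hK'ne u huK'
    have hge := hK'min _ hmem
    have heq : elimKey G.dist idv K' (roundLoser G.dist idv K') = elimKey G.dist idv K' u :=
      le_antisymm hle hge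
    have h2 := congrArg (fun p : Lex (ℤ × ℤ) => (ofLex p).2) heq
    simp only [elimKey, ofLex_toLex] at h2
    have hidv : idv (roundLoser G.dist idv K') = idv u := by omega
    exact hid hidv
  exact ⟨hloser, claim2, pB⟩
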